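/- With the weights ω_j defined for the case k ≤ i < l (ω_j = αj + γ(n+1) + nδσ for 1 ≤ j ≤ k; ω_j = γ + nδσ + nδ for k < j ≤ i; ω_j = γ + nδ for i < j ≤ l; ω_j = β(n−j) + γ for l < j ≤ n), the total cost Z equals nδμ + Σ_{j=1}^n ω_j p_{[j]}, where q^(1) = Σ_{j=1}^k p_{[j]}, q^(2) = Σ_{j=1}^l p_{[j]} + μ + σΣ_{j=1}^i p_{[j]}, C_{[j]} = Σ_{t=1}^j p_{[t]} for j ≤ i and C_{[j]} = Σ_{t=1}^j p_{[t]} + μ + σΣ_{t=1}^i p_{[t]} for j > i, and Z = α·Σ_{j=1}^k (q^(1) + p_{[j]} − C_{[j]}) + β·Σ_{j=l+1}^n (C_{[j]} − p_{[j]} − q^(2)) + γ·Σ_{j=1}^n (q^(1) + p_{[j]}) + nδ(q^(2) − q^(1)). -/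
import Mathlib

private lemma sumS (p : ℕ → ℝ) (k : ℕ) :
    ∑ j ∈ Finset.Ioc 0 k, ∑ t ∈ Finset.Ioc 0 j, p t
      = ∑ t ∈ Finset.Ioc 0 k, ((k : ℝ) + 1 - t) * p t := by
  induction k with
  | zero => simp
  | succ k ih =>
    rw [Finset.sum_Ioc_succ_top (Nat.zero_le k), ih]
    push_cast
    rw [Finset.sum_Ioc_succ_top (Nat.zero_le k) p,
      Finset.sum_Ioc_succ_top (Nat.zero_le k) (fun t : ℕ => ((k:ℝ) + 1 + 1 - t) * p t)]
    have h : ∑ t ∈ Finset.Ioc 0 k, ((k:ℝ) + 1 + 1 - t) * p t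
        = ∑ t ∈ Finset.Ioc 0 k, (((k:ℝ) + 1 - t) * p t + p t) :=
      Finset.sum_congr rfl fun t _ => by ring
    rw [h, Finset.sum_add_distrib]
    push_cast
    ring

/-- Cost decomposition for the case `k ≤ i < l`: with maintenance after
position `i`, the total cost equals `n δ μ + ∑ ω j * p j`. -/
theorem stmt_13 (n k l i : ℕ) (hk1 : 1 ≤ k) (hki : k ≤ i) (hil : i < l)
    (hln : l ≤ n)
    (α β γ δ μ σ : ℝ) (hα : 0 < α) (hβ : 0 < β) (hγ : 0 < γ) (hδ : 0 < δ)
    (hμ : 0 < μ) (hσ : 0 ≤ σ)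
    (p C ω : ℕ → ℝ) (hp : ∀ j, 1 ≤ j → j ≤ n → 0 < p j)
    (q1 q2 Z : ℝ)
    (hC1 : ∀ j, j ≤ i → C j = ∑ t ∈ Finset.Icc 1 j, p t)
    (hC2 : ∀ j, i < j → j ≤ n →
      C j = ∑ t ∈ Finset.Icc 1 j, p t + (μ + σ * ∑ t ∈ Finset.Icc 1 i, p t))
    (hq1 : q1 = ∑ j ∈ Finset.Icc 1 k, p j)
    (hq2 : q2 = ∑ j ∈ Finset.Icc 1 l, p j + μ + σ * ∑ j ∈ Finset.Icc 1 i, p j)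
    (hω1 : ∀ j, 1 ≤ j → j ≤ k → ω j = α * j + γ * (n + 1) + n * δ * σ)
    (hω2 : ∀ j, k < j → j ≤ i → ω j = γ + n * δ * σ + n * δ)
    (hω3 : ∀ j, i < j → j ≤ l → ω j = γ + n * δ)
    (hω4 : ∀ j, l < j → j ≤ n → ω j = β * ((n : ℝ) - j) + γ)
    (hZ : Z = α * ∑ j ∈ Finset.Icc 1 k, (q1 + p j - C j) +
      β * ∑ j ∈ Finset.Icc (l + 1) n, (C j - p j - q2) +
      γ * ∑ j ∈ Finset.Icc 1 n, (q1 + p j) + n * δ * (q2 - q1)) :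
    Z = n * δ * μ + ∑ j ∈ Finset.Icc 1 n, ω j * p j := by
  have hicc : ∀ m : ℕ, Finset.Icc 1 m = Finset.Ioc 0 m := fun m => Finset.Icc_add_one_left_eq_Ioc 0 m
  have hiln : Finset.Icc (l+1) n = Finset.Ioc l n := Finset.Icc_add_one_left_eq_Ioc l n
  simp only [hicc, hiln] at hZ hq1 hq2 hC1 hC2 ⊢
  -- term A
  have hA : ∑ j ∈ Finset.Ioc 0 k, (q1 + p j - C j)
      = ∑ j ∈ Finset.Ioc 0 k, (j : ℝ) * p j := by
    have h1 : ∀ j ∈ Finset.Ioc 0 k, q1 + p j - C j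
        = (∑ t ∈ Finset.Ioc 0 k, p t) + p j - ∑ t ∈ Finset.Ioc 0 j, p t := by
      intro j hj
      rw [hC1 j (le_trans (Finset.mem_Ioc.mp hj).2 hki), hq1]
    rw [Finset.sum_congr rfl h1, Finset.sum_sub_distrib, Finset.sum_add_distrib,
      Finset.sum_const, sumS, Nat.card_Ioc, Nat.sub_zero, nsmul_eq_mul]
    rw [show (k : ℝ) * ∑ t ∈ Finset.Ioc 0 k, p t
        = ∑ t ∈ Finset.Ioc 0 k, (k : ℝ) * p t from Finset.mul_sum _ _ _]
    rw [← Finset.sum_add_distrib, ← Finset.sum_sub_distrib]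
    exact Finset.sum_congr rfl fun t _ => by ring
  -- term B
  have hB : ∑ j ∈ Finset.Ioc l n, (C j - p j - q2)
      = ∑ j ∈ Finset.Ioc l n, ((n : ℝ) - j) * p j := by
    have h1 : ∀ j ∈ Finset.Ioc l n, C j - p j - q2
        = (∑ t ∈ Finset.Ioc 0 j, p t) - p j - ∑ t ∈ Finset.Ioc 0 l, p t := by
      intro j hj
      obtain ⟨hj1, hj2⟩ := Finset.mem_Ioc.mp hj
      rw [hC2 j (lt_trans hil hj1) hj2, hq2]
      ring
    have hsplit : ∑ j ∈ Finset.Ioc 0 l, ∑ t ∈ Finset.Ioc 0 j, p t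
          + ∑ j ∈ Finset.Ioc l n, ∑ t ∈ Finset.Ioc 0 j, p t
        = ∑ j ∈ Finset.Ioc 0 n, ∑ t ∈ Finset.Ioc 0 j, p t :=
      Finset.sum_Ioc_consecutive _ (Nat.zero_le l) hln
    have hSsum : ∑ j ∈ Finset.Ioc l n, ∑ t ∈ Finset.Ioc 0 j, p t
        = ((n : ℝ) - l) * (∑ t ∈ Finset.Ioc 0 l, p t)
          + ∑ t ∈ Finset.Ioc l n, ((n : ℝ) + 1 - t) * p t := by
      rw [eq_sub_of_add_eq' hsplit, sumS, sumS]
      rw [← Finset.sum_Ioc_consecutive (fun t : ℕ => ((n:ℝ) + 1 - t) * p t)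
        (Nat.zero_le l) hln]
      have key : ∑ t ∈ Finset.Ioc 0 l, ((n:ℝ)+1-t) * p t
          = ∑ t ∈ Finset.Ioc 0 l, ((l:ℝ)+1-t) * p t
            + ((n:ℝ) - l) * ∑ t ∈ Finset.Ioc 0 l, p t := by
        rw [Finset.mul_sum, ← Finset.sum_add_distrib]
        exact Finset.sum_congr rfl fun t _ => by ring
      rw [key]
      ring
    rw [Finset.sum_congr rfl h1, Finset.sum_sub_distrib, Finset.sum_sub_distrib,
      Finset.sum_const, Nat.card_Ioc, nsmul_eq_mul, hSsum, Nat.cast_sub hln]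
    rw [show ∑ j ∈ Finset.Ioc l n, ((n:ℝ) - j) * p j
        = ∑ j ∈ Finset.Ioc l n, (((n:ℝ) + 1 - j) * p j - p j) from
      Finset.sum_congr rfl fun t _ => by ring]
    rw [Finset.sum_sub_distrib]
    ring
  -- gamma term
  have hG : ∑ j ∈ Finset.Ioc 0 n, (q1 + p j)
      = (n : ℝ) * (∑ t ∈ Finset.Ioc 0 k, p t) + ∑ t ∈ Finset.Ioc 0 n, p t := by
    rw [Finset.sum_add_distrib, Finset.sum_const, Nat.card_Ioc, Nat.sub_zero,
      nsmul_eq_mul, hq1]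
  -- split RHS sum
  have hsplit1 : ∑ j ∈ Finset.Ioc 0 k, ω j * p j + ∑ j ∈ Finset.Ioc k i, ω j * p j
      = ∑ j ∈ Finset.Ioc 0 i, ω j * p j :=
    Finset.sum_Ioc_consecutive _ (Nat.zero_le k) hki
  have hsplit2 : ∑ j ∈ Finset.Ioc 0 i, ω j * p j + ∑ j ∈ Finset.Ioc i l, ω j * p j
      = ∑ j ∈ Finset.Ioc 0 l, ω j * p j :=
    Finset.sum_Ioc_consecutive _ (Nat.zero_le i) (le_of_lt hil)
  have hsplit3 : ∑ j ∈ Finset.Ioc 0 l, ω j * p j + ∑ j ∈ Finset.Ioc l n, ω j * p j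
      = ∑ j ∈ Finset.Ioc 0 n, ω j * p j :=
    Finset.sum_Ioc_consecutive _ (Nat.zero_le l) hln
  have hR : ∑ j ∈ Finset.Ioc 0 n, ω j * p j
      = α * (∑ j ∈ Finset.Ioc 0 k, (j:ℝ) * p j)
        + (γ * (n+1) + n*δ*σ) * (∑ j ∈ Finset.Ioc 0 k, p j)
        + (γ + n*δ*σ + n*δ) * (∑ j ∈ Finset.Ioc k i, p j)
        + (γ + n*δ) * (∑ j ∈ Finset.Ioc i l, p j)
        + β * (∑ j ∈ Finset.Ioc l n, ((n:ℝ)-j) * p j)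
        + γ * (∑ j ∈ Finset.Ioc l n, p j) := by
    rw [← hsplit3, ← hsplit2, ← hsplit1]
    have e1 : ∑ j ∈ Finset.Ioc 0 k, ω j * p j
        = ∑ j ∈ Finset.Ioc 0 k, (α * ((j:ℝ) * p j) + (γ * (n+1) + n*δ*σ) * p j) := by
      refine Finset.sum_congr rfl fun j hj => ?_
      obtain ⟨h1, h2⟩ := Finset.mem_Ioc.mp hj
      rw [hω1 j h1 h2]; ring
    have e2 : ∑ j ∈ Finset.Ioc k i, ω j * p j
        = ∑ j ∈ Finset.Ioc k i, (γ + n*δ*σ + n*δ) * p j := by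
      refine Finset.sum_congr rfl fun j hj => ?_
      obtain ⟨h1, h2⟩ := Finset.mem_Ioc.mp hj
      rw [hω2 j h1 h2]
    have e3 : ∑ j ∈ Finset.Ioc i l, ω j * p j
        = ∑ j ∈ Finset.Ioc i l, (γ + n*δ) * p j := by
      refine Finset.sum_congr rfl fun j hj => ?_
      obtain ⟨h1, h2⟩ := Finset.mem_Ioc.mp hj
      rw [hω3 j h1 h2]
    have e4 : ∑ j ∈ Finset.Ioc l n, ω j * p j
        = ∑ j ∈ Finset.Ioc l n, (β * (((n:ℝ)-j) * p j) + γ * p j) := by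
      refine Finset.sum_congr rfl fun j hj => ?_
      obtain ⟨h1, h2⟩ := Finset.mem_Ioc.mp hj
      rw [hω4 j h1 h2]; ring
    rw [e1, e2, e3, e4, Finset.sum_add_distrib, Finset.sum_add_distrib,
      ← Finset.mul_sum, ← Finset.mul_sum, ← Finset.mul_sum, ← Finset.mul_sum,
      ← Finset.mul_sum, ← Finset.mul_sum]
    ring
  -- piece decompositions
  have hSi : ∑ j ∈ Finset.Ioc 0 k, p j + ∑ j ∈ Finset.Ioc k i, p j
      = ∑ j ∈ Finset.Ioc 0 i, p j :=
    Finset.sum_Ioc_consecutive _ (Nat.zero_le k) hki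
  have hSl : ∑ j ∈ Finset.Ioc 0 i, p j + ∑ j ∈ Finset.Ioc i l, p j
      = ∑ j ∈ Finset.Ioc 0 l, p j :=
    Finset.sum_Ioc_consecutive _ (Nat.zero_le i) (le_of_lt hil)
  have hSn : ∑ j ∈ Finset.Ioc 0 l, p j + ∑ j ∈ Finset.Ioc l n, p j
      = ∑ j ∈ Finset.Ioc 0 n, p j :=
    Finset.sum_Ioc_consecutive _ (Nat.zero_le l) hln
  rw [hZ, hA, hB, hG, hR, hq2, hq1, ← hSn, ← hSl, ← hSi]
  ring
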